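/- Validity of the ◇-axiom: for every recursive causal Kripke setting (K,t), every world w, every intervention Y←y (possibly empty) with Y ⊆ V × W, and every formula φ of the modal causal language L_M, (K,t,w) ⊩ [Y←y]◇φ if and only if (K,t,w) ⊩ ◇[Y←y]φ. -/

import Mathlib

open Classical

noncomputable section

/-- A causal Kripke model `K = (S, W, Rel, F)`: the signature `S` consists of the disjoint
finite sets `Exo` of exogenous and `Endo` of endogenous variables together with a finite
nonempty range `range Γ w` of possible values for each variable `Γ` at each world `w`;
`World` is a finite set of possible worlds, `Rel` is the accessibility relation, and `eqs`
assigns to each endogenous variable `X` and world `w` a structural equation computing the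
value of `(X,w)` from the values of all the other variables (it does not depend on the
coordinate `(X,w)` itself, and its value lies in the range of `(X,w)`). -/
structure CKM where
  Exo : Type
  Endo : Type
  World : Type
  Val : Type
  exoFin : Fintype Exo
  endoFin : Fintype Endo
  worldFin : Fintype World
  Rel : World → World → Prop
  range : (Exo ⊕ Endo) → World → Finset Val
  range_nonempty : ∀ Γ w, (range Γ w).Nonempty
  eqs : Endo → World → (((Exo ⊕ Endo) × World) → Val) → Val
  eqs_mem : ∀ X w g, eqs X w g ∈ range (Sum.inr X) w
  eqs_indep : ∀ X w g g',
    (∀ p, p ≠ (Sum.inr X, w) → g p = g' p) → eqs X w g = eqs X w g'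

namespace CKM

/-- A context assigns to every exogenous variable at every world a value in its range. -/
def ValidContext (K : CKM) (t : K.Exo → K.World → K.Val) : Prop :=
  ∀ U w, t U w ∈ K.range (Sum.inl U) w

/-- `v` is a solution of the causal Kripke setting `(K, t)`: it agrees with the context `t`
on all exogenous variables and satisfies all structural equations. -/
def Solves (K : CKM) (t : K.Exo → K.World → K.Val)
    (v : ((K.Exo ⊕ K.Endo) × K.World) → K.Val) : Prop :=
  (∀ U w, v (Sum.inl U, w) = t U w) ∧ ∀ X w, v (Sum.inr X, w) = K.eqs X w v

/-- The variable `p` influences the (endogenous) variable `q` (i.e. `q` directly causally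
depends on `p`): some change in the value of `p`, keeping all other variables fixed
(within their ranges), changes the value of the structural equation of `q`. -/
def Influences (K : CKM) (p q : (K.Exo ⊕ K.Endo) × K.World) : Prop :=
  ∃ X w, q = (Sum.inr X, w) ∧
    ∃ g g', (∀ r, g r ∈ K.range r.1 r.2) ∧ (∀ r, g' r ∈ K.range r.1 r.2) ∧
      (∀ r, r ≠ p → g r = g' r) ∧ K.eqs X w g ≠ K.eqs X w g'

/-- A causal Kripke model is recursive if it contains no cyclic dependencies. -/
def Recursive (K : CKM) : Prop :=
  ∀ p, ¬ Relation.TransGen K.Influences p p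

/-- The causal Kripke model obtained from `K` by the intervention setting the variables in
`dom` to the values prescribed by `val`. -/
def doInt (K : CKM) (dom : Finset (K.Endo × K.World)) (val : K.Endo × K.World → K.Val) :
    CKM :=
  { K with
    eqs := fun X w g =>
      if (X, w) ∈ dom ∧ val (X, w) ∈ K.range (Sum.inr X) w then val (X, w)
      else K.eqs X w g
    eqs_mem := by
      intro X w g
      by_cases h : (X, w) ∈ dom ∧ val (X, w) ∈ K.range (Sum.inr X) w
      · simp only [if_pos h]; exact h.2
      · simp only [if_neg h]; exact K.eqs_mem X w g
    eqs_indep := by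
      intro X w g g' hgg'
      by_cases h : (X, w) ∈ dom ∧ val (X, w) ∈ K.range (Sum.inr X) w
      · simp only [if_pos h]
      · simp only [if_neg h]; exact K.eqs_indep X w g g' hgg' }

end CKM

/-- Events (modal-Boolean combinations of primitive events): primitive events `X = x` and
`(X,w) = x`, negation, conjunction and the modal operator `□`. -/
inductive Event (E W V : Type) : Type
  | eq : E → V → Event E W V
  | eqAt : E → W → V → Event E W V
  | neg : Event E W V → Event E W V
  | conj : Event E W V → Event E W V → Event E W V
  | box : Event E W V → Event E W V

namespace CKM

/-- Satisfaction of an event at a world of `K`, relative to a solution `v` of the setting. -/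
def SatE (K : CKM) (v : ((K.Exo ⊕ K.Endo) × K.World) → K.Val) :
    K.World → Event K.Endo K.World K.Val → Prop
  | w, .eq X x => v (Sum.inr X, w) = x
  | _, .eqAt X w' x => v (Sum.inr X, w') = x
  | w, .neg α => ¬ SatE K v w α
  | w, .conj α β => SatE K v w α ∧ SatE K v w β
  | w, .box α => ∀ w', K.Rel w w' → SatE K v w' α

/-- `(K,t,w) ⊩ [dom ← val] α` : the event `α` holds at `w` in the model obtained from the
intervention `dom ← val`, in the context `t`. -/
def SatI (K : CKM) (t : K.Exo → K.World → K.Val) (dom : Finset (K.Endo × K.World))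
    (val : K.Endo × K.World → K.Val) (w : K.World) (α : Event K.Endo K.World K.Val) :
    Prop :=
  ∀ v, (K.doInt dom val).Solves t v → (K.doInt dom val).SatE v w α

/-- AC1 : `α` actually holds at `w`, and each conjunct `(X_i, w_j) = y_ij` of `Y = y`
actually holds. -/
def AC1 (K : CKM) (t : K.Exo → K.World → K.Val) (w : K.World)
    (Y : Finset (K.Endo × K.World)) (y : K.Endo × K.World → K.Val)
    (α : Event K.Endo K.World K.Val) : Prop :=
  ∀ v, K.Solves t v → K.SatE v w α ∧ ∀ p ∈ Y, v (Sum.inr p.1, p.2) = y p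

/-- AC2a together with AC2bᵒ (they share the partition `Z`, `N` and the setting `n`):
there is a partition of the endogenous variables into `Z ⊇ Y` and `N` and settings `y'`
of `Y` and `n` of `N` such that `(K,t,w) ⊩ [Y ← y', N ← n] ¬α`, and, where `z*` are the
actual values of the variables of `Z`, for every subset `Z'` of `Z \ Y`,
`(K,t,w) ⊩ [Y ← y, N ← n, Z' ← z'*] α`. -/
def AC2o (K : CKM) (t : K.Exo → K.World → K.Val) (w : K.World)
    (Y : Finset (K.Endo × K.World)) (y : K.Endo × K.World → K.Val)
    (α : Event K.Endo K.World K.Val) : Prop :=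
  ∃ Z N : Finset (K.Endo × K.World), ∃ y' n : K.Endo × K.World → K.Val,
    Y ⊆ Z ∧ Disjoint Z N ∧ (∀ p : K.Endo × K.World, p ∈ Z ∨ p ∈ N) ∧
    (∀ p ∈ Y, y' p ∈ K.range (Sum.inr p.1) p.2) ∧
    (∀ p ∈ N, n p ∈ K.range (Sum.inr p.1) p.2) ∧
    K.SatI t (Y ∪ N) (fun p => if p ∈ Y then y' p else n p) w (.neg α) ∧
    ∀ v, K.Solves t v → ∀ Z' ⊆ Z \ Y,
      K.SatI t (Y ∪ N ∪ Z')
        (fun p => if p ∈ Y then y p else if p ∈ N then n p else v (Sum.inr p.1, p.2)) w α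

/-- AC2a together with AC2bᵘ (updated definition): as in `AC2o`, but moreover the
restoration of the actual values `z'*` must keep `α` true for every subset `N'` of `N`. -/
def AC2u (K : CKM) (t : K.Exo → K.World → K.Val) (w : K.World)
    (Y : Finset (K.Endo × K.World)) (y : K.Endo × K.World → K.Val)
    (α : Event K.Endo K.World K.Val) : Prop :=
  ∃ Z N : Finset (K.Endo × K.World), ∃ y' n : K.Endo × K.World → K.Val,
    Y ⊆ Z ∧ Disjoint Z N ∧ (∀ p : K.Endo × K.World, p ∈ Z ∨ p ∈ N) ∧
    (∀ p ∈ Y, y' p ∈ K.range (Sum.inr p.1) p.2) ∧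
    (∀ p ∈ N, n p ∈ K.range (Sum.inr p.1) p.2) ∧
    K.SatI t (Y ∪ N) (fun p => if p ∈ Y then y' p else n p) w (.neg α) ∧
    ∀ v, K.Solves t v → ∀ Z' ⊆ Z \ Y, ∀ N' ⊆ N,
      K.SatI t (Y ∪ N' ∪ Z')
        (fun p => if p ∈ Y then y p else if p ∈ N' then n p else v (Sum.inr p.1, p.2)) w α

/-- AC2aᵐ (modified definition): there are a set `N` of endogenous variables and a setting
`y'` of the variables in `Y` such that, where `n*` are the actual values of the variables
in `N`, `(K,t,w) ⊩ [Y ← y', N ← n*] ¬α`. -/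
def AC2m (K : CKM) (t : K.Exo → K.World → K.Val) (w : K.World)
    (Y : Finset (K.Endo × K.World)) (y : K.Endo × K.World → K.Val)
    (α : Event K.Endo K.World K.Val) : Prop :=
  ∃ N : Finset (K.Endo × K.World), ∃ y' : K.Endo × K.World → K.Val,
    (∀ p ∈ Y, y' p ∈ K.range (Sum.inr p.1) p.2) ∧
    ∀ v, K.Solves t v →
      K.SatI t (Y ∪ N)
        (fun p => if p ∈ Y then y' p else v (Sum.inr p.1, p.2)) w (.neg α)

/-- `Y = y` is an actual cause of `α` in `(K,t)` at `w` by the ORIGINAL HP definition. -/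
def IsCauseO (K : CKM) (t : K.Exo → K.World → K.Val) (w : K.World)
    (Y : Finset (K.Endo × K.World)) (y : K.Endo × K.World → K.Val)
    (α : Event K.Endo K.World K.Val) : Prop :=
  K.AC1 t w Y y α ∧ K.AC2o t w Y y α ∧
    ∀ Y' ⊂ Y, ∀ y'' : K.Endo × K.World → K.Val,
      ¬ (K.AC1 t w Y' y'' α ∧ K.AC2o t w Y' y'' α)

/-- `Y = y` is an actual cause of `α` in `(K,t)` at `w` by the UPDATED HP definition. -/
def IsCauseU (K : CKM) (t : K.Exo → K.World → K.Val) (w : K.World)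
    (Y : Finset (K.Endo × K.World)) (y : K.Endo × K.World → K.Val)
    (α : Event K.Endo K.World K.Val) : Prop :=
  K.AC1 t w Y y α ∧ K.AC2u t w Y y α ∧
    ∀ Y' ⊂ Y, ∀ y'' : K.Endo × K.World → K.Val,
      ¬ (K.AC1 t w Y' y'' α ∧ K.AC2u t w Y' y'' α)

/-- `Y = y` is an actual cause of `α` in `(K,t)` at `w` by the MODIFIED HP definition. -/
def IsCauseM (K : CKM) (t : K.Exo → K.World → K.Val) (w : K.World)
    (Y : Finset (K.Endo × K.World)) (y : K.Endo × K.World → K.Val)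
    (α : Event K.Endo K.World K.Val) : Prop :=
  K.AC1 t w Y y α ∧ K.AC2m t w Y y α ∧
    ∀ Y' ⊂ Y, ∀ y'' : K.Endo × K.World → K.Val,
      ¬ (K.AC1 t w Y' y'' α ∧ K.AC2m t w Y' y'' α)

/-- `(X,w) = x` is part of a cause of `α` in `(K,t)` at `w'` by the original HP
definition: it is a conjunct of some actual cause `Y = y` of `α` at `w'`. -/
def PartOfCauseO (K : CKM) (t : K.Exo → K.World → K.Val) (w' : K.World)
    (X : K.Endo) (w : K.World) (x : K.Val) (α : Event K.Endo K.World K.Val) : Prop :=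
  ∃ Y y, K.IsCauseO t w' Y y α ∧ (X, w) ∈ Y ∧ y (X, w) = x

/-- `(X,w) = x` is part of a cause of `α` in `(K,t)` at `w'` by the updated HP
definition. -/
def PartOfCauseU (K : CKM) (t : K.Exo → K.World → K.Val) (w' : K.World)
    (X : K.Endo) (w : K.World) (x : K.Val) (α : Event K.Endo K.World K.Val) : Prop :=
  ∃ Y y, K.IsCauseU t w' Y y α ∧ (X, w) ∈ Y ∧ y (X, w) = x

/-- `(X,w) = x` is part of a cause of `α` in `(K,t)` at `w'` by the modified HP
definition. -/
def PartOfCauseM (K : CKM) (t : K.Exo → K.World → K.Val) (w' : K.World)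
    (X : K.Endo) (w : K.World) (x : K.Val) (α : Event K.Endo K.World K.Val) : Prop :=
  ∃ Y y, K.IsCauseM t w' Y y α ∧ (X, w) ∈ Y ∧ y (X, w) = x

end CKM

/-- Formulas of the modal causal language `L_M`: primitive events `X = x` and `(X,w) = x`,
negation, conjunction, the modal operator `□`, and interventions `[Y ← y] α` applied to
(modal-Boolean) events `α`. -/
inductive Formula (E W V : Type) : Type
  | eq : E → V → Formula E W V
  | eqAt : E → W → V → Formula E W V
  | neg : Formula E W V → Formula E W V
  | conj : Formula E W V → Formula E W V → Formula E W V
  | box : Formula E W V → Formula E W V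
  | interv : Finset (E × W) → ((E × W) → V) → Event E W V → Formula E W V

/-- The possibility operator `◇ = ¬□¬` on events. -/
def Event.dia {E W V : Type} (α : Event E W V) : Event E W V := .neg (.box (.neg α))

/-- The possibility operator `◇ = ¬□¬` on formulas. -/
def Formula.dia {E W V : Type} (φ : Formula E W V) : Formula E W V := .neg (.box (.neg φ))

namespace CKM

/-- Satisfaction of a formula of `L_M` at a world of `K`, relative to a solution `v` of the
causal Kripke setting `(K,t)`. -/
def SatF (K : CKM) (t : K.Exo → K.World → K.Val)
    (v : ((K.Exo ⊕ K.Endo) × K.World) → K.Val) :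
    K.World → Formula K.Endo K.World K.Val → Prop
  | w, .eq X x => v (Sum.inr X, w) = x
  | _, .eqAt X w' x => v (Sum.inr X, w') = x
  | w, .neg φ => ¬ SatF K t v w φ
  | w, .conj φ ψ => SatF K t v w φ ∧ SatF K t v w ψ
  | w, .box φ => ∀ w', K.Rel w w' → SatF K t v w' φ
  | w, .interv dom val α => K.SatI t dom val w α

/-- `(K,t,w) ⊩ φ` : satisfaction of a formula of `L_M` at the world `w` of the causal
Kripke setting `(K,t)`. -/
def Sat (K : CKM) (t : K.Exo → K.World → K.Val) (w : K.World)
    (φ : Formula K.Endo K.World K.Val) : Prop :=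
  ∀ v, K.Solves t v → K.SatF t v w φ

end CKM

section Aux

namespace CKM

/-- Helper: a non-influencing coordinate can be changed freely (within ranges). -/
theorem eqs_eq_of_not_influences (K : CKM) {X : K.Endo} {w : K.World}
    {a : (K.Exo ⊕ K.Endo) × K.World}
    (hni : ¬ K.Influences a (Sum.inr X, w))
    {g g' : ((K.Exo ⊕ K.Endo) × K.World) → K.Val}
    (hg : ∀ r, g r ∈ K.range r.1 r.2) (hg' : ∀ r, g' r ∈ K.range r.1 r.2)
    (h : ∀ r, r ≠ a → g r = g' r) : K.eqs X w g = K.eqs X w g' := by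
  by_contra hne
  exact hni ⟨X, w, rfl, g, g', hg, hg', h, hne⟩

/-- Structural equations only depend on the influencing coordinates. -/
theorem eqs_congr (K : CKM) (X : K.Endo) (w : K.World)
    {g g' : ((K.Exo ⊕ K.Endo) × K.World) → K.Val}
    (hg : ∀ r, g r ∈ K.range r.1 r.2) (hg' : ∀ r, g' r ∈ K.range r.1 r.2)
    (h : ∀ r, K.Influences r (Sum.inr X, w) → g r = g' r) :
    K.eqs X w g = K.eqs X w g' := by
  classical
  letI := K.exoFin; letI := K.endoFin; letI := K.worldFin
  have key : ∀ S : Finset ((K.Exo ⊕ K.Endo) × K.World),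
      K.eqs X w (fun r => if r ∈ S then g' r else g r) = K.eqs X w g := by
    intro S
    induction S using Finset.induction with
    | empty => simp
    | @insert a S ha ih =>
      by_cases hag : g a = g' a
      · have : (fun r => if r ∈ insert a S then g' r else g r)
            = (fun r => if r ∈ S then g' r else g r) := by
          funext r
          by_cases hr : r = a
          · subst hr; simp [ha, hag]
          · simp [Finset.mem_insert, hr]
        rw [this, ih]
      · have hni : ¬ K.Influences a (Sum.inr X, w) := fun hi => hag (h a hi)
        have step : K.eqs X w (fun r => if r ∈ insert a S then g' r else g r)
            = K.eqs X w (fun r => if r ∈ S then g' r else g r) := by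
          apply K.eqs_eq_of_not_influences hni
          · intro r; split <;> [exact hg' r; exact hg r]
          · intro r; split <;> [exact hg' r; exact hg r]
          · intro r hr
            simp only [Finset.mem_insert]
            have : (r = a ∨ r ∈ S) ↔ r ∈ S := by
              constructor
              · rintro (rfl | hrS); exact absurd rfl hr; exact hrS
              · exact Or.inr
            rw [if_congr this rfl rfl]
        rw [step, ih]
  have huniv := key Finset.univ
  have : (fun r => if r ∈ (Finset.univ : Finset ((K.Exo ⊕ K.Endo) × K.World)) then g' r else g r) = g' := by
    funext r; simp
  rw [this] at huniv
  exact huniv.symm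

/-- Any solution of a setting takes values in the ranges. -/
theorem Solves.mem_range {K : CKM} {t : K.Exo → K.World → K.Val}
    (ht : K.ValidContext t) {v : ((K.Exo ⊕ K.Endo) × K.World) → K.Val}
    (hv : K.Solves t v) : ∀ p, v p ∈ K.range p.1 p.2 := by
  rintro ⟨U | X, w⟩
  · rw [hv.1 U w]; exact ht U w
  · rw [hv.2 X w]; exact K.eqs_mem X w v

theorem influences_wf (K : CKM) (hK : K.Recursive) : WellFounded K.Influences := by
  letI := K.exoFin; letI := K.endoFin; letI := K.worldFin
  haveI : IsTrans _ (Relation.TransGen K.Influences) := inferInstance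
  haveI : IsIrrefl _ (Relation.TransGen K.Influences) := ⟨hK⟩
  exact Subrelation.wf (fun h => Relation.TransGen.single h)
    (Finite.wellFounded_of_trans_of_irrefl (Relation.TransGen K.Influences))

noncomputable def solAux (K : CKM) (t : K.Exo → K.World → K.Val)
    (wf : WellFounded K.Influences) : ((K.Exo ⊕ K.Endo) × K.World) → K.Val :=
  wf.fix (fun p ih => match p, ih with
    | (Sum.inl U, w), _ => t U w
    | (Sum.inr X, w), ih => K.eqs X w (fun q =>
        if h : K.Influences q (Sum.inr X, w) then ih q h
        else (K.range_nonempty q.1 q.2).choose))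

theorem solAux_exo (K : CKM) (t : K.Exo → K.World → K.Val)
    (wf : WellFounded K.Influences) (U : K.Exo) (w : K.World) :
    K.solAux t wf (Sum.inl U, w) = t U w := by
  unfold solAux
  rw [WellFounded.fix_eq]

theorem solAux_endo (K : CKM) (t : K.Exo → K.World → K.Val)
    (wf : WellFounded K.Influences) (X : K.Endo) (w : K.World) :
    K.solAux t wf (Sum.inr X, w) = K.eqs X w (fun q =>
        if K.Influences q (Sum.inr X, w) then K.solAux t wf q
        else (K.range_nonempty q.1 q.2).choose) := by
  classical
  conv_lhs => unfold solAux; rw [WellFounded.fix_eq]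
  congr 1

/-- Recursive settings with valid contexts have unique solutions. -/
theorem exists_unique_solution (K : CKM) (hK : K.Recursive)
    (t : K.Exo → K.World → K.Val) (ht : K.ValidContext t) :
    ∃! v, K.Solves t v := by
  classical
  have wf := K.influences_wf hK
  set v := K.solAux t wf with hv
  have hrange : ∀ p, v p ∈ K.range p.1 p.2 := by
    rintro ⟨U | X, w⟩
    · rw [hv, K.solAux_exo t wf]; exact ht U w
    · rw [hv, K.solAux_endo t wf]; exact K.eqs_mem X w _
  have hsol : K.Solves t v := by
    refine ⟨fun U w => K.solAux_exo t wf U w, fun X w => ?_⟩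
    rw [hv, K.solAux_endo t wf]
    apply K.eqs_congr
    · intro r
      split <;> rename_i h
      · exact hrange r
      · exact (K.range_nonempty r.1 r.2).choose_spec
    · exact hrange
    · intro r hr; rw [if_pos hr]
  refine ⟨v, hsol, fun v' hv' => ?_⟩
  funext p
  induction p using wf.induction with
  | _ p ih =>
    obtain ⟨U | X, w⟩ := p
    · rw [hv'.1, hsol.1]
    · rw [hv'.2, hsol.2]
      exact K.eqs_congr X w (hv'.mem_range ht) (hsol.mem_range ht) ih

theorem doInt_recursive (K : CKM) (hK : K.Recursive)
    (dom : Finset (K.Endo × K.World)) (val : K.Endo × K.World → K.Val) :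
    (K.doInt dom val).Recursive := by
  intro p hp
  apply hK p
  refine Relation.TransGen.mono ?_ _ _ hp
  rintro a b ⟨X, w, rfl, g, g', hg, hg', hagree, hne⟩
  by_cases hc : (X, w) ∈ dom ∧ val (X, w) ∈ K.range (Sum.inr X) w
  · exfalso; apply hne; simp only [doInt]; split_ifs with h <;> [rfl; exact absurd hc h]
  · refine ⟨X, w, rfl, g, g', hg, hg', hagree, ?_⟩
    simp only [doInt] at hne; split_ifs at hne with h <;> [exact absurd h hc; exact hne]

end CKM

end Aux

/-- Validity of the ◇-axiom: for every recursive causal Kripke setting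
`(K,t)`, every world `w`, every (possibly empty) intervention `Y ← y` with
`Y ⊆ V × W` (whose prescribed values lie in the corresponding ranges), and every formula
`α` of the modal causal language `L_M` (an event, so that `[Y←y]◇α` is well formed),
`(K,t,w) ⊩ [Y←y]◇α` if and only if `(K,t,w) ⊩ ◇[Y←y]α`. -/
theorem dia_axiom_valid (K : CKM) (hK : K.Recursive)
    (t : K.Exo → K.World → K.Val) (ht : K.ValidContext t) (w : K.World)
    (dom : Finset (K.Endo × K.World)) (val : K.Endo × K.World → K.Val)
    (hval : ∀ p ∈ dom, val p ∈ K.range (Sum.inr p.1) p.2)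
    (α : Event K.Endo K.World K.Val) :
    K.Sat t w (.interv dom val α.dia) ↔ K.Sat t w (Formula.dia (.interv dom val α)) := by
  classical
  obtain ⟨v₁, hv₁, huniq⟩ :=
    (K.doInt dom val).exists_unique_solution (K.doInt_recursive hK dom val) t ht
  constructor
  · intro hL v hv
    have h2 := hL v hv v₁ hv₁
    simp only [Formula.dia, Event.dia, CKM.SatF, CKM.SatE, CKM.SatI] at h2 ⊢
    push_neg at h2 ⊢
    obtain ⟨w', hw', hsat⟩ := h2
    refine ⟨w', hw', fun v' hv' => ?_⟩
    rw [huniq v' hv']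
    exact hsat
  · intro hR v hv v' hv'
    have h1 := hR v hv
    simp only [Formula.dia, Event.dia, CKM.SatF, CKM.SatE, CKM.SatI] at h1 ⊢
    push_neg at h1 ⊢
    obtain ⟨w', hw', hsat⟩ := h1
    exact ⟨w', hw', hsat v' hv'⟩
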